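/- arXiv:2007.05567 — 2 statements merged into one kernel-verified Lean document; each statement's English description precedes it below -/
import Mathlib

section
/- Let S = ⟨a_1,…,a_n⟩ ⊆ ℤ^m ⊕ T be a reduced monoid and let T_S be the set of elements of S having at least two different factorizations. Then: (1) T_S = ∅ if and only if the lattice ideal I_S is the zero ideal; (2) if I_S ≠ 0 and {g_1,…,g_s} is a binomial generating set of I_S, then T_S = (deg_S(g_1) + S) ∪ ⋯ ∪ (deg_S(g_s) + S). -/
open MvPolynomial

/-- The `S`-degree of an exponent vector. -/
def degS {n : ℕ} {G : Type*} [AddCommMonoid G] (a : Fin n → G) (lam : Fin n → ℕ) : G :=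
  ∑ i, lam i • a i

/-- The lattice ideal of the monoid generated by `a`. -/
noncomputable def latticeIdeal (K : Type) [Field K] {n : ℕ} {G : Type*} [AddCommMonoid G]
    (a : Fin n → G) : Ideal (MvPolynomial (Fin n) K) :=
  Ideal.span {f | ∃ α β : Fin n →₀ ℕ, degS a ⇑α = degS a ⇑β ∧
    f = monomial α (1 : K) - monomial β 1}

/-- The set of elements of `S = ⟨a_1,…,a_n⟩` having at least two different factorizations. -/
def TSet {n : ℕ} {G : Type*} [AddCommMonoid G] (a : Fin n → G) : Set G :=
  {x | ∃ lam nu : Fin n → ℕ, lam ≠ nu ∧ degS a lam = x ∧ degS a nu = x}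


lemma degS_add' {n : ℕ} {G : Type*} [AddCommMonoid G] (a : Fin n → G) (u v : Fin n → ℕ) :
    degS a (u + v) = degS a u + degS a v := by
  simp [degS, add_smul, Finset.sum_add_distrib]

lemma degS_mem_closure' {n : ℕ} {G : Type*} [AddCommMonoid G] (a : Fin n → G) (u : Fin n → ℕ) :
    degS a u ∈ AddSubmonoid.closure (Set.range a) := by
  refine AddSubmonoid.sum_mem _ fun i _ => ?_
  exact nsmul_mem (AddSubmonoid.subset_closure (Set.mem_range_self i)) (u i)

lemma exists_degS_of_mem_closure' {n : ℕ} {G : Type*} [AddCommMonoid G] (a : Fin n → G) (y : G)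
    (hy : y ∈ AddSubmonoid.closure (Set.range a)) : ∃ u : Fin n → ℕ, degS a u = y := by
  induction hy using AddSubmonoid.closure_induction with
  | mem x hx =>
      obtain ⟨i, rfl⟩ := hx
      exact ⟨fun j => if j = i then 1 else 0, by simp [degS, Finset.sum_ite_eq']⟩
  | zero => exact ⟨0, by simp [degS]⟩
  | add x y _ _ hu hv =>
      obtain ⟨u, rfl⟩ := hu; obtain ⟨v, rfl⟩ := hv
      exact ⟨u + v, (degS_add' a u v)⟩

/-- **Proposition.** Let `S = ⟨a_1,…,a_n⟩ ⊆ ℤ^m ⊕ T` be a reduced monoid.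
(1) `T_S = ∅` iff `I_S = 0`; (2) if `I_S ≠ 0` and `{g_1,…,g_s}` is a binomial
generating set of `I_S` then `T_S = (deg_S g_1 + S) ∪ ⋯ ∪ (deg_S g_s + S)`. -/
theorem TSet_eq_union_degS_add
    {m n : ℕ} {T : Type} [AddCommGroup T] [Fintype T]
    (K : Type) [Field K]
    (a : Fin n → (Fin m → ℤ) × T)
    -- `S` is reduced:
    (hred : ∀ x, x ∈ AddSubmonoid.closure (Set.range a) →
      -x ∈ AddSubmonoid.closure (Set.range a) → x = 0)
    -- `a` is the minimal set of generators:
    (hmin : ∀ i, a i ∉ AddSubmonoid.closure (Set.range a \ {a i})) :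
    (TSet a = ∅ ↔ latticeIdeal K a = ⊥)
    ∧ (∀ (s : ℕ) (gα gβ : Fin s → (Fin n →₀ ℕ)),
        -- `g_i = x^{gα i} - x^{gβ i}` is a (nonzero) binomial of `S`-degree
        -- `deg_S(g_i) = degS a (gα i)`:
        (∀ i, gα i ≠ gβ i) →
        (∀ i, degS a ⇑(gα i) = degS a ⇑(gβ i)) →
        -- `{g_1,…,g_s}` generates `I_S`:
        Ideal.span (Set.range fun i =>
          monomial (gα i) (1 : K) - monomial (gβ i) 1) = latticeIdeal K a →
        latticeIdeal K a ≠ ⊥ →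
        TSet a = {x | ∃ i : Fin s, ∃ y ∈ AddSubmonoid.closure (Set.range a),
          x = degS a ⇑(gα i) + y}) := by
  constructor
  · constructor
    · intro hT
      rw [latticeIdeal, ← le_bot_iff, Ideal.span_le]
      rintro f ⟨α, β, hdeg, rfl⟩
      have hcoe : ⇑α = ⇑β := by
        by_contra hne
        have : degS a ⇑α ∈ TSet a := ⟨⇑α, ⇑β, hne, rfl, hdeg.symm⟩
        rw [hT] at this
        exact this
      have : α = β := DFunLike.coe_injective hcoe
      simp [this]
    · intro hI
      ext x
      simp only [Set.mem_empty_iff_false, iff_false]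
      rintro ⟨lam, nu, hne, hl, hn⟩
      set α := Finsupp.equivFunOnFinite.symm lam with hα
      set β := Finsupp.equivFunOnFinite.symm nu with hβ
      have hca : ⇑α = lam := Finsupp.equivFunOnFinite.apply_symm_apply lam
      have hcb : ⇑β = nu := Finsupp.equivFunOnFinite.apply_symm_apply nu
      have hmem : (monomial α (1:K) - monomial β 1) ∈ latticeIdeal K a :=
        Ideal.subset_span ⟨α, β, by rw [hca, hcb, hl, hn], rfl⟩
      rw [hI, Ideal.mem_bot] at hmem
      have hab : β ≠ α := fun h => hne (by rw [← hca, ← hcb, h])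
      have : coeff α (monomial α (1:K) - monomial β 1) = 1 := by
        simp [coeff_monomial, hab]
      rw [hmem] at this
      simp at this
  · intro s gα gβ hne hdeg hspan _hI0
    ext x
    constructor
    · rintro ⟨lam, nu, hlamnu, hl, hn⟩
      set α := Finsupp.equivFunOnFinite.symm lam with hα
      set β := Finsupp.equivFunOnFinite.symm nu with hβ
      have hca : ⇑α = lam := Finsupp.equivFunOnFinite.apply_symm_apply lam
      have hcb : ⇑β = nu := Finsupp.equivFunOnFinite.apply_symm_apply nu
      have hmem : (monomial α (1:K) - monomial β 1) ∈ latticeIdeal K a :=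
        Ideal.subset_span ⟨α, β, by rw [hca, hcb, hl, hn], rfl⟩
      rw [← hspan] at hmem
      obtain ⟨c, hc⟩ := Submodule.mem_span_range_iff_exists_fun _ |>.mp hmem
      have hab : β ≠ α := fun h => hlamnu (by rw [← hca, ← hcb, h])
      have hco : coeff α (monomial α (1:K) - monomial β 1) = 1 := by
        simp [coeff_monomial, hab]
      rw [← hc] at hco
      rw [coeff_sum] at hco
      have : ∃ i ∈ Finset.univ, coeff α (c i • (monomial (gα i) (1:K) - monomial (gβ i) 1)) ≠ 0 := by
        apply Finset.exists_ne_zero_of_sum_ne_zero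
        rw [hco]; exact one_ne_zero
      obtain ⟨i, -, hi⟩ := this
      rw [smul_eq_mul, mul_sub, coeff_sub, coeff_mul_monomial', coeff_mul_monomial'] at hi
      have hle : gα i ≤ α ∨ gβ i ≤ α := by
        by_contra h
        push_neg at h
        simp [h.1, h.2] at hi
      have key : ∀ γ : Fin n →₀ ℕ, γ ≤ α → degS a ⇑γ + degS a ⇑(α - γ) = x := by
        intro γ hγ
        rw [← degS_add' a ⇑γ ⇑(α - γ)]
        have : ⇑γ + ⇑(α - γ) = ⇑α := by
          rw [← Finsupp.coe_add, add_tsub_cancel_of_le hγ]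
        rw [this, hca, hl]
      rcases hle with hle | hle
      · exact ⟨i, degS a ⇑(α - gα i), degS_mem_closure' a _, (key _ hle).symm⟩
      · exact ⟨i, degS a ⇑(α - gβ i), degS_mem_closure' a _, by rw [hdeg i]; exact (key _ hle).symm⟩
    · rintro ⟨i, y, hy, rfl⟩
      obtain ⟨u, rfl⟩ := exists_degS_of_mem_closure' a y hy
      refine ⟨⇑(gα i) + u, ⇑(gβ i) + u, ?_, ?_, ?_⟩
      · intro h
        exact hne i (DFunLike.coe_injective (add_left_injective u h))
      · rw [degS_add']
      · rw [degS_add', hdeg i]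
end

section
/- Let S = ⟨a_1,…,a_n⟩ ⊆ ℕ be a numerical semigroup with Frobenius number F(S). Then: (1) if w ∈ L_S and z is an integer with z > w + F(S), then z ∈ L_S; (2) if L_S ≠ ∅, then L_S ∪ {0} is a numerical semigroup. -/
/-- The set of elements of `S = ⟨a_1,…,a_n⟩` having at least two different factorizations
of the same length. -/
def LSet {n : ℕ} {G : Type*} [AddCommMonoid G] (a : Fin n → G) : Set G :=
  {x | ∃ lam nu : Fin n → ℕ, lam ≠ nu ∧ degS a lam = x ∧ degS a nu = x ∧
    ∑ i, lam i = ∑ i, nu i}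

lemma degS_add {n : ℕ} (a : Fin n → ℕ) (l m : Fin n → ℕ) :
    degS a (l + m) = degS a l + degS a m := by
  simp [degS, add_smul, add_mul, Finset.sum_add_distrib]

lemma mem_closure_iff_degS {n : ℕ} (a : Fin n → ℕ) (x : ℕ) :
    x ∈ AddSubmonoid.closure (Set.range a) ↔ ∃ mu : Fin n → ℕ, degS a mu = x := by
  constructor
  · intro hx
    induction hx using AddSubmonoid.closure_induction with
    | mem y hy =>
      obtain ⟨i, rfl⟩ := hy
      exact ⟨fun j => if j = i then 1 else 0, by simp [degS, Finset.sum_ite_eq']⟩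
    | zero => exact ⟨0, by simp [degS]⟩
    | add x y hx hy ihx ihy =>
      obtain ⟨l, rfl⟩ := ihx
      obtain ⟨m, rfl⟩ := ihy
      exact ⟨l + m, degS_add a l m⟩
  · rintro ⟨mu, rfl⟩
    exact AddSubmonoid.sum_mem _ fun i _ =>
      AddSubmonoid.nsmul_mem _ (AddSubmonoid.subset_closure (Set.mem_range_self i)) (mu i)

lemma LSet_add_mem {n : ℕ} (a : Fin n → ℕ) {w s : ℕ} (hw : w ∈ LSet a)
    (hs : s ∈ AddSubmonoid.closure (Set.range a)) : w + s ∈ LSet a := by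
  obtain ⟨lam, nu, hne, hl, hn, hlen⟩ := hw
  obtain ⟨mu, rfl⟩ := (mem_closure_iff_degS a s).1 hs
  refine ⟨lam + mu, nu + mu, ?_, by rw [degS_add, hl], by rw [degS_add, hn], ?_⟩
  · intro h
    apply hne
    funext i
    have := congrFun h i
    simpa using this
  · simp only [Pi.add_apply, Finset.sum_add_distrib, hlen]

/-- **Corollary.** Let `S = ⟨a_1,…,a_n⟩ ⊆ ℕ` be a numerical semigroup with Frobenius
number `F(S)` (the largest integer not in `S`).
(1) If `w ∈ L_S` and `z` is an integer with `z > w + F(S)`, then `z ∈ L_S`;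
(2) if `L_S ≠ ∅`, then `L_S ∪ {0}` is a numerical semigroup. -/
theorem LSet_numerical
    {n : ℕ} (a : Fin n → ℕ)
    -- `S = ⟨a_1,…,a_n⟩` is a numerical semigroup, i.e. `ℕ \ S` is finite:
    (hfin : {x : ℕ | x ∉ AddSubmonoid.closure (Set.range a)}.Finite)
    -- `F` is the Frobenius number: the largest integer not in `S`:
    (F : ℤ)
    (hF : IsGreatest {z : ℤ | z ∉
      ((fun k : ℕ => (k : ℤ)) '' (AddSubmonoid.closure (Set.range a) : Set ℕ))} F) :
    ((∀ w ∈ LSet a, ∀ z : ℤ, (w : ℤ) + F < z →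
        z ∈ (fun k : ℕ => (k : ℤ)) '' LSet a)
    ∧ (LSet a ≠ ∅ →
        ∃ M : AddSubmonoid ℕ, (M : Set ℕ) = LSet a ∪ {0} ∧ {x : ℕ | x ∉ M}.Finite)) := by
  have part1 : ∀ w ∈ LSet a, ∀ z : ℤ, (w : ℤ) + F < z →
      z ∈ (fun k : ℕ => (k : ℤ)) '' LSet a := by
    intro w hw z hz
    have hzw : F < z - w := by linarith
    have : z - (w : ℤ) ∉ {z : ℤ | z ∉
        ((fun k : ℕ => (k : ℤ)) '' (AddSubmonoid.closure (Set.range a) : Set ℕ))} := by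
      intro h
      exact absurd (hF.2 h) (not_le.2 hzw)
    simp only [Set.mem_setOf_eq, not_not] at this
    obtain ⟨s, hs, hseq⟩ := this
    refine ⟨w + s, LSet_add_mem a hw hs, ?_⟩
    push_cast
    linarith [hseq]
  refine ⟨part1, fun hne => ?_⟩
  obtain ⟨w0, hw0⟩ := Set.nonempty_iff_ne_empty.2 hne
  have hsub : LSet a ⊆ (AddSubmonoid.closure (Set.range a) : Set ℕ) := by
    rintro x ⟨lam, nu, -, hl, -, -⟩
    exact (mem_closure_iff_degS a x).2 ⟨lam, hl⟩
  refine ⟨{ carrier := LSet a ∪ {0},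
            zero_mem' := Or.inr rfl,
            add_mem' := ?_ }, rfl, ?_⟩
  · rintro x y (hx | hx) (hy | hy)
    · exact Or.inl (LSet_add_mem a hx (hsub hy))
    · simp only [Set.mem_singleton_iff] at hy; subst hy; exact Or.inl (by simpa using hx)
    · simp only [Set.mem_singleton_iff] at hx; subst hx; exact Or.inl (by simpa using hy)
    · simp only [Set.mem_singleton_iff] at hx hy; subst hx; subst hy; exact Or.inr rfl
  · apply Set.Finite.subset (Set.finite_Iic ((w0 : ℤ) + F).toNat)
    intro x hx
    simp only [Set.mem_setOf_eq] at hx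
    by_contra hxle
    simp only [Set.mem_Iic, not_le] at hxle
    have hxz : (w0 : ℤ) + F < (x : ℤ) := by
      have := hxle
      omega
    obtain ⟨y, hy, hyeq⟩ := part1 w0 hw0 x hxz
    simp only [] at hyeq
    have : y = x := by exact_mod_cast hyeq
    subst this
    exact hx (Or.inl hy)
end
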